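/- Let V, W be nonzero finite-dimensional complex vector spaces, T ∈ End(W) nilpotent, and Q : W → V, P : V → W with datum (V,W,0,T,Q,P) an irreducible Harnad datum (S = 0). If Q P = −λ · Id_V for some λ ≠ 0, then Q is surjective, P is injective, and setting V' := W / Im P with projection Q' : W → V' and P' : V' → W the unique map with P' Q' − P Q = λ Id_W (coming from the splitting −λ^{-1} P Q + λ^{-1} P' Q' = Id_W), one has Q' P' = λ Id_{V'} and dim V' = dim W − dim V. -/

import Mathlib

open Module

/-- for an irreducible Harnad datum `(V,W,0,T,Q,P)` (with `S = 0`, `T`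
nilpotent, `V, W ≠ 0`) satisfying `QP = −λ·Id` with `λ ≠ 0`: `Q` is surjective, `P` is
injective, and with `V' := W/Im P`, `Q' : W → V'` the projection, there is a unique
`P' : V' → W` with `P'Q' − PQ = λ·Id`, any such `P'` satisfies `Q'P' = λ·Id`, and
`dim V' = dim W − dim V`. -/
theorem stmt12
    (V W : Type*) [AddCommGroup V] [Module ℂ V] [FiniteDimensional ℂ V] [Nontrivial V]
    [AddCommGroup W] [Module ℂ W] [FiniteDimensional ℂ W] [Nontrivial W]
    (T : Module.End ℂ W) (hT : IsNilpotent T)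
    (Q : W →ₗ[ℂ] V) (P : V →ₗ[ℂ] W)
    (hirr : ∀ (X : Submodule ℂ V) (Y : Submodule ℂ W),
      Y.map T ≤ Y → Y.map Q ≤ X → X.map P ≤ Y →
      (X = ⊥ ∧ Y = ⊥) ∨ (X = ⊤ ∧ Y = ⊤))
    (lam : ℂ) (hlam : lam ≠ 0)
    (hQP : Q ∘ₗ P = -lam • LinearMap.id) :
    Function.Surjective Q ∧ Function.Injective P ∧
    (∃! P' : (W ⧸ LinearMap.range P) →ₗ[ℂ] W,
        P' ∘ₗ (LinearMap.range P).mkQ = P ∘ₗ Q + lam • LinearMap.id) ∧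
    (∀ P' : (W ⧸ LinearMap.range P) →ₗ[ℂ] W,
        P' ∘ₗ (LinearMap.range P).mkQ = P ∘ₗ Q + lam • LinearMap.id →
        (LinearMap.range P).mkQ ∘ₗ P' = lam • LinearMap.id) ∧
    finrank ℂ (W ⧸ LinearMap.range P) = finrank ℂ W - finrank ℂ V := by

  have hQPapply : ∀ v : V, Q (P v) = -lam • v := by
    intro v
    have := congrArg (fun f => f v) hQP
    simpa using this
  have hPinj : Function.Injective P := by
    intro a b hab
    have : -lam • a = -lam • b := by rw [← hQPapply, ← hQPapply, hab]
    have hne : -lam ≠ 0 := neg_ne_zero.mpr hlam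
    exact smul_right_injective V hne this
  have hQsurj : Function.Surjective Q := by
    intro v
    exact ⟨P ((-lam)⁻¹ • v), by
      have : (-lam)⁻¹ * lam = -1 := by field_simp
      simp [hQPapply v, smul_smul, this, inv_mul_cancel₀ hlam]⟩
  have hker : LinearMap.range P ≤ LinearMap.ker (P ∘ₗ Q + lam • LinearMap.id) := by
    rintro _ ⟨v, rfl⟩
    simp [LinearMap.mem_ker, hQPapply v, smul_smul, neg_smul]
  refine ⟨hQsurj, hPinj, ?_, ?_, ?_⟩
  · refine ⟨(LinearMap.range P).liftQ _ hker, ?_, ?_⟩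
    · ext w; simp
    · intro P' hP'
      ext w
      have := congrArg (fun f => f w) hP'
      simpa using this
  · intro P' hP'
    have hsurj : Function.Surjective (LinearMap.range P).mkQ := Submodule.mkQ_surjective _
    refine LinearMap.ext fun x => ?_
    obtain ⟨w, rfl⟩ := hsurj x
    have h1 : P' ((LinearMap.range P).mkQ w) = P (Q w) + lam • w := by
      have := congrArg (fun f => f w) hP'
      simpa using this
    have h2 : (LinearMap.range P).mkQ (P (Q w)) = 0 := by
      simp [Submodule.Quotient.mk_eq_zero]
    calc Submodule.Quotient.mk (P' (Submodule.Quotient.mk w))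
        = (LinearMap.range P).mkQ (P' ((LinearMap.range P).mkQ w)) := rfl
      _ = (LinearMap.range P).mkQ (P (Q w)) + lam • (LinearMap.range P).mkQ w := by
          rw [h1]; simp
      _ = lam • Submodule.Quotient.mk w := by rw [h2]; simp
  · have h := Submodule.finrank_quotient_add_finrank (LinearMap.range P)
    have hr : finrank ℂ (LinearMap.range P) = finrank ℂ V :=
      LinearMap.finrank_range_of_inj hPinj
    omega
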